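/- (Soundness of LNS_Kt) For every linear nested sequent S, if S is derivable in the calculus LNS_Kt, then its formula translation τ(S) is valid, i.e., forced at every world of every Kripke model. -/
import Mathlib


/-- Formulae of tense logic: atoms (indexed by naturals), ⊥, →, □, ◇, ■, ◆. -/
inductive Formula : Type
  | atom : ℕ → Formula
  | bot : Formula
  | imp : Formula → Formula → Formula
  | box : Formula → Formula
  | dia : Formula → Formula
  | bbox : Formula → Formula
  | bdia : Formula → Formula

def Formula.neg (A : Formula) : Formula := A.imp .bot
def Formula.and (A B : Formula) : Formula := (A.imp B.neg).neg
def Formula.or (A B : Formula) : Formula := A.neg.imp B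
def Formula.top : Formula := Formula.bot.imp .bot

/-- Formulas built from atoms, ⊥, →, □, ■ only (no diamonds). -/
def Formula.NoDia : Formula → Prop
  | .atom _ => True
  | .bot => True
  | .imp A B => A.NoDia ∧ B.NoDia
  | .box A => A.NoDia
  | .dia _ => False
  | .bbox A => A.NoDia
  | .bdia _ => False

/-- Structural connectives: `up` is ↗ and `dn` is ↙. -/
inductive Dir : Type
  | up
  | dn

/-- Linear nested sequents: a nonempty list of components `Γ ⇒ Δ`
joined by the structural connectives ↗ (`up`) and ↙ (`dn`). -/
inductive LNS : Type
  | single (Γ Δ : Multiset Formula) : LNS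
  | up (Γ Δ : Multiset Formula) (S : LNS) : LNS
  | dn (Γ Δ : Multiset Formula) (S : LNS) : LNS

/-- A (possibly empty) context: a list of components, each together with the
structural connective joining it to what follows. -/
abbrev Ctx := List (Multiset Formula × Multiset Formula × Dir)

/-- `plug G S` is the linear nested sequent `G ⇗ S` (just `S` when `G` is empty). -/
def plug : Ctx → LNS → LNS
  | [], S => S
  | (Γ, Δ, Dir.up) :: G, S => LNS.up Γ Δ (plug G S)
  | (Γ, Δ, Dir.dn) :: G, S => LNS.dn Γ Δ (plug G S)

/-- The structural connective joining the context to what follows it (none if empty). -/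
def lastDir : Ctx → Option Dir
  | [] => none
  | [(_, _, d)] => some d
  | _ :: G => lastDir G

/-- Kripke forcing for tense logic. -/
def Force {W : Type} (R : W → W → Prop) (V : W → ℕ → Prop) : W → Formula → Prop
  | w, .atom p => V w p
  | _, .bot => False
  | w, .imp A B => Force R V w A → Force R V w B
  | w, .box A => ∀ v, R w v → Force R V v A
  | w, .dia A => ∃ v, R w v ∧ Force R V v A
  | w, .bbox A => ∀ v, R v w → Force R V v A
  | w, .bdia A => ∃ v, R v w ∧ Force R V v A

/-- Conjunction of a finite multiset of formulae (empty conjunction is ⊤). -/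
noncomputable def bigAnd (Γ : Multiset Formula) : Formula :=
  Γ.toList.foldr Formula.and Formula.top

/-- Disjunction of a finite multiset of formulae (empty disjunction is ⊥). -/
noncomputable def bigOr (Δ : Multiset Formula) : Formula :=
  Δ.toList.foldr Formula.or Formula.bot

/-- The formula translation τ of a linear nested sequent. -/
noncomputable def tau : LNS → Formula
  | .single Γ Δ => (bigAnd Γ).imp (bigOr Δ)
  | .up Γ Δ S => (bigAnd Γ).imp ((bigOr Δ).or (tau S).box)
  | .dn Γ Δ S => (bigAnd Γ).imp ((bigOr Δ).or (tau S).bbox)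

/-- A formula is valid if it is forced at every world of every Kripke model. -/
def Valid (A : Formula) : Prop :=
  ∀ (W : Type) (_ : Nonempty W) (R : W → W → Prop) (V : W → ℕ → Prop) (w : W),
    Force R V w A

/-- A linear nested sequent is falsifiable if its formula translation fails at
some world of some Kripke model. -/
def Falsifiable (S : LNS) : Prop :=
  ∃ (W : Type) (_ : Nonempty W) (R : W → W → Prop) (V : W → ℕ → Prop) (w : W),
    ¬ Force R V w (tau S)

/-- The calculus LNS_Kt. -/
inductive Deriv : LNS → Prop
  | id (G : Ctx) (Γ Δ : Multiset Formula) (p : ℕ) :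
      Deriv (plug G (.single (.atom p ::ₘ Γ) (.atom p ::ₘ Δ)))
  | botL (G : Ctx) (Γ Δ : Multiset Formula) :
      Deriv (plug G (.single (.bot ::ₘ Γ) Δ))
  | ew (G : Ctx) (Θ Λ : Multiset Formula) (d : Dir) (Γ Δ : Multiset Formula) :
      Deriv (plug G (.single Θ Λ)) →
      Deriv (plug (G ++ [(Θ, Λ, d)]) (.single Γ Δ))
  | impR (G : Ctx) (Γ Δ : Multiset Formula) (A B : Formula) :
      Deriv (plug G (.single (A ::ₘ Γ) (B ::ₘ A.imp B ::ₘ Δ))) →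
      Deriv (plug G (.single Γ (A.imp B ::ₘ Δ)))
  | impL (G : Ctx) (Γ Δ : Multiset Formula) (A B : Formula) :
      Deriv (plug G (.single (B ::ₘ A.imp B ::ₘ Γ) Δ)) →
      Deriv (plug G (.single (A.imp B ::ₘ Γ) (A ::ₘ Δ))) →
      Deriv (plug G (.single (A.imp B ::ₘ Γ) Δ))
  | boxR1 (G : Ctx) (Γ Δ Θ Λ : Multiset Formula) (A : Formula) :
      Deriv (plug G (.dn Γ (A ::ₘ Δ) (.single Θ (A.box ::ₘ Λ)))) →
      Deriv (plug G (.dn Γ Δ (.up Θ (A.box ::ₘ Λ) (.single 0 {A})))) →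
      Deriv (plug G (.dn Γ Δ (.single Θ (A.box ::ₘ Λ))))
  | bboxR1 (G : Ctx) (Γ Δ Θ Λ : Multiset Formula) (A : Formula) :
      Deriv (plug G (.up Γ (A ::ₘ Δ) (.single Θ (A.bbox ::ₘ Λ)))) →
      Deriv (plug G (.up Γ Δ (.dn Θ (A.bbox ::ₘ Λ) (.single 0 {A})))) →
      Deriv (plug G (.up Γ Δ (.single Θ (A.bbox ::ₘ Λ))))
  | boxR2 (G : Ctx) (Γ Δ : Multiset Formula) (A : Formula) :
      lastDir G ≠ some Dir.dn →
      Deriv (plug G (.up Γ (A.box ::ₘ Δ) (.single 0 {A}))) →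
      Deriv (plug G (.single Γ (A.box ::ₘ Δ)))
  | bboxR2 (G : Ctx) (Γ Δ : Multiset Formula) (A : Formula) :
      lastDir G ≠ some Dir.up →
      Deriv (plug G (.dn Γ (A.bbox ::ₘ Δ) (.single 0 {A}))) →
      Deriv (plug G (.single Γ (A.bbox ::ₘ Δ)))
  | boxL1 (G : Ctx) (Γ Δ Θ Λ : Multiset Formula) (A : Formula) :
      Deriv (plug G (.up (A.box ::ₘ Γ) Δ (.single (A ::ₘ Θ) Λ))) →
      Deriv (plug G (.up (A.box ::ₘ Γ) Δ (.single Θ Λ)))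
  | bboxL1 (G : Ctx) (Γ Δ Θ Λ : Multiset Formula) (A : Formula) :
      Deriv (plug G (.dn (A.bbox ::ₘ Γ) Δ (.single (A ::ₘ Θ) Λ))) →
      Deriv (plug G (.dn (A.bbox ::ₘ Γ) Δ (.single Θ Λ)))
  | boxL2 (G : Ctx) (Γ Δ Θ Λ : Multiset Formula) (A : Formula) :
      Deriv (plug G (.single (A ::ₘ Γ) Δ)) →
      Deriv (plug G (.dn Γ Δ (.single (A.box ::ₘ Θ) Λ)))
  | bboxL2 (G : Ctx) (Γ Δ Θ Λ : Multiset Formula) (A : Formula) :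
      Deriv (plug G (.single (A ::ₘ Γ) Δ)) →
      Deriv (plug G (.up Γ Δ (.single (A.bbox ::ₘ Θ) Λ)))

section Aux

open Classical

variable {W : Type} {R : W → W → Prop} {V : W → ℕ → Prop}

lemma force_imp {w : W} {A B : Formula} :
    Force R V w (A.imp B) ↔ (Force R V w A → Force R V w B) := Iff.rfl

lemma force_box {w : W} {A : Formula} :
    Force R V w A.box ↔ ∀ v, R w v → Force R V v A := Iff.rfl

lemma force_bbox {w : W} {A : Formula} :
    Force R V w A.bbox ↔ ∀ v, R v w → Force R V v A := Iff.rfl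

lemma force_and {w : W} {A B : Formula} :
    Force R V w (A.and B) ↔ Force R V w A ∧ Force R V w B := by
  simp only [Formula.and, Formula.neg, Force]
  tauto

lemma force_or {w : W} {A B : Formula} :
    Force R V w (A.or B) ↔ Force R V w A ∨ Force R V w B := by
  simp only [Formula.or, Formula.neg, Force]
  tauto

lemma force_top {w : W} : Force R V w Formula.top := fun h => h

lemma force_bigAnd {w : W} {Γ : Multiset Formula} :
    Force R V w (bigAnd Γ) ↔ ∀ A ∈ Γ, Force R V w A := by
  have key : ∀ l : List Formula,
      Force R V w (l.foldr Formula.and Formula.top) ↔ ∀ A ∈ l, Force R V w A := by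
    intro l
    induction l with
    | nil => simpa using force_top
    | cons a l ih => simp [force_and, ih]
  rw [bigAnd, key]
  simp

lemma force_bigOr {w : W} {Δ : Multiset Formula} :
    Force R V w (bigOr Δ) ↔ ∃ A ∈ Δ, Force R V w A := by
  have key : ∀ l : List Formula,
      Force R V w (l.foldr Formula.or Formula.bot) ↔ ∃ A ∈ l, Force R V w A := by
    intro l
    induction l with
    | nil => simp [Force]
    | cons a l ih => simp [force_or, ih]
  rw [bigOr, key]
  simp

lemma tau_single_iff {w : W} {Γ Δ : Multiset Formula} :
    Force R V w (tau (.single Γ Δ)) ↔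
      ((∀ A ∈ Γ, Force R V w A) → ∃ A ∈ Δ, Force R V w A) := by
  show (Force R V w (bigAnd Γ) → Force R V w (bigOr Δ)) ↔ _
  rw [force_bigAnd, force_bigOr]

lemma tau_up_iff {w : W} {Γ Δ : Multiset Formula} {S : LNS} :
    Force R V w (tau (.up Γ Δ S)) ↔
      ((∀ A ∈ Γ, Force R V w A) →
        (∃ A ∈ Δ, Force R V w A) ∨ ∀ v, R w v → Force R V v (tau S)) := by
  show (Force R V w (bigAnd Γ) → Force R V w ((bigOr Δ).or (tau S).box)) ↔ _
  rw [force_bigAnd]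
  constructor
  · intro h h1
    rcases force_or.mp (h h1) with h2 | h2
    · exact Or.inl (force_bigOr.mp h2)
    · exact Or.inr h2
  · intro h h1
    apply force_or.mpr
    rcases h h1 with h2 | h2
    · exact Or.inl (force_bigOr.mpr h2)
    · exact Or.inr h2

lemma tau_dn_iff {w : W} {Γ Δ : Multiset Formula} {S : LNS} :
    Force R V w (tau (.dn Γ Δ S)) ↔
      ((∀ A ∈ Γ, Force R V w A) →
        (∃ A ∈ Δ, Force R V w A) ∨ ∀ v, R v w → Force R V v (tau S)) := by
  show (Force R V w (bigAnd Γ) → Force R V w ((bigOr Δ).or (tau S).bbox)) ↔ _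
  rw [force_bigAnd]
  constructor
  · intro h h1
    rcases force_or.mp (h h1) with h2 | h2
    · exact Or.inl (force_bigOr.mp h2)
    · exact Or.inr h2
  · intro h h1
    apply force_or.mpr
    rcases h h1 with h2 | h2
    · exact Or.inl (force_bigOr.mpr h2)
    · exact Or.inr h2

/-- The chain of worlds determined by a context. -/
def Link (R : W → W → Prop) (V : W → ℕ → Prop) : W → Ctx → W → Prop
  | w, [], v => v = w
  | w, (Γ, Δ, Dir.up) :: G, v =>
      (∀ A ∈ Γ, Force R V w A) ∧ ¬ (∃ A ∈ Δ, Force R V w A) ∧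
        ∃ u, R w u ∧ Link R V u G v
  | w, (Γ, Δ, Dir.dn) :: G, v =>
      (∀ A ∈ Γ, Force R V w A) ∧ ¬ (∃ A ∈ Δ, Force R V w A) ∧
        ∃ u, R u w ∧ Link R V u G v

lemma force_plug {G : Ctx} {S : LNS} {w : W} :
    Force R V w (tau (plug G S)) ↔ ∀ v, Link R V w G v → Force R V v (tau S) := by
  induction G generalizing w with
  | nil =>
    constructor
    · rintro h v rfl; exact h
    · intro h; exact h w rfl
  | cons x G ih =>
    obtain ⟨Γ, Δ, d⟩ := x
    cases d
    · show Force R V w (tau (LNS.up Γ Δ (plug G S))) ↔ _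
      rw [tau_up_iff]
      constructor
      · rintro h v ⟨h1, h2, u, hru, hl⟩
        rcases h h1 with h3 | h3
        · exact absurd h3 h2
        · exact (ih.mp (h3 u hru)) v hl
      · intro h h1
        by_cases h2 : ∃ A ∈ Δ, Force R V w A
        · exact Or.inl h2
        · exact Or.inr fun u hru => ih.mpr fun v hl => h v ⟨h1, h2, u, hru, hl⟩
    · show Force R V w (tau (LNS.dn Γ Δ (plug G S))) ↔ _
      rw [tau_dn_iff]
      constructor
      · rintro h v ⟨h1, h2, u, hru, hl⟩
        rcases h h1 with h3 | h3
        · exact absurd h3 h2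
        · exact (ih.mp (h3 u hru)) v hl
      · intro h h1
        by_cases h2 : ∃ A ∈ Δ, Force R V w A
        · exact Or.inl h2
        · exact Or.inr fun u hru => ih.mpr fun v hl => h v ⟨h1, h2, u, hru, hl⟩

lemma plug_append (G₁ G₂ : Ctx) (S : LNS) :
    plug (G₁ ++ G₂) S = plug G₁ (plug G₂ S) := by
  induction G₁ with
  | nil => rfl
  | cons x G ih => obtain ⟨Γ, Δ, d⟩ := x; cases d <;> simp [plug, ih]

end Aux

lemma valid_plug {G : Ctx} {S : LNS} :
    Valid (tau (plug G S)) ↔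
      ∀ (W : Type) (_ : Nonempty W) (R : W → W → Prop) (V : W → ℕ → Prop)
        (w v : W), Link R V w G v → Force R V v (tau S) := by
  constructor
  · intro h W hW R V w v hl
    exact (force_plug.mp (h W hW R V w)) v hl
  · intro h W hW R V w
    exact force_plug.mpr fun v hl => h W hW R V w v hl

lemma single_zero {W : Type} {R : W → W → Prop} {V : W → ℕ → Prop} {w : W}
    {A : Formula} (h : Force R V w (tau (.single (0 : Multiset Formula) {A}))) :
    Force R V w A := by
  rw [tau_single_iff] at h
  obtain ⟨B, hB, hfB⟩ := h (by simp)
  rwa [Multiset.mem_singleton.mp hB] at hfB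

/-- Soundness of LNS_Kt: if a linear nested sequent is derivable, then its
formula translation is valid. -/
theorem lnskt_sound (S : LNS) (h : Deriv S) : Valid (tau S) := by
  induction h with
  | id G Γ Δ p =>
    rw [valid_plug]
    intro W hW R V w v _
    rw [tau_single_iff]
    intro h
    exact ⟨.atom p, Multiset.mem_cons_self _ _, h _ (Multiset.mem_cons_self _ _)⟩
  | botL G Γ Δ =>
    rw [valid_plug]
    intro W hW R V w v _
    rw [tau_single_iff]
    intro h
    exact absurd (h _ (Multiset.mem_cons_self _ _)) (fun h => h)
  | ew G Θ Λ d Γ Δ _ ih =>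
    rw [plug_append, valid_plug]
    intro W hW R V w v hl
    have hp := valid_plug.mp ih W hW R V w v hl
    rw [tau_single_iff] at hp
    cases d
    · show Force R V v (tau (LNS.up Θ Λ (LNS.single Γ Δ)))
      rw [tau_up_iff]
      intro h1
      exact Or.inl (hp h1)
    · show Force R V v (tau (LNS.dn Θ Λ (LNS.single Γ Δ)))
      rw [tau_dn_iff]
      intro h1
      exact Or.inl (hp h1)
  | impR G Γ Δ A B _ ih =>
    rw [valid_plug]
    intro W hW R V w v hl
    have hp := valid_plug.mp ih W hW R V w v hl
    rw [tau_single_iff] at hp ⊢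
    intro hΓ
    by_cases hAB : Force R V v (A.imp B)
    · exact ⟨A.imp B, Multiset.mem_cons_self _ _, hAB⟩
    · have hA : Force R V v A := by
        by_contra hA
        exact hAB fun h => absurd h hA
      have hnB : ¬ Force R V v B := fun hB => hAB fun _ => hB
      obtain ⟨C, hC, hfC⟩ := hp (by
        intro C hC
        rcases Multiset.mem_cons.mp hC with rfl | hC
        · exact hA
        · exact hΓ C hC)
      rcases Multiset.mem_cons.mp hC with rfl | hC
      · exact absurd hfC hnB
      rcases Multiset.mem_cons.mp hC with rfl | hC
      · exact absurd hfC hAB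
      · exact ⟨C, Multiset.mem_cons_of_mem hC, hfC⟩
  | impL G Γ Δ A B _ _ ih1 ih2 =>
    rw [valid_plug]
    intro W hW R V w v hl
    have hp1 := valid_plug.mp ih1 W hW R V w v hl
    have hp2 := valid_plug.mp ih2 W hW R V w v hl
    rw [tau_single_iff] at hp1 hp2 ⊢
    intro hΓ
    have hAB : Force R V v (A.imp B) := hΓ _ (Multiset.mem_cons_self _ _)
    have hΓ' : ∀ C ∈ Γ, Force R V v C := fun C hC => hΓ C (Multiset.mem_cons_of_mem hC)
    obtain ⟨C, hC, hfC⟩ := hp2 hΓ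
    rcases Multiset.mem_cons.mp hC with rfl | hC
    · apply hp1
      intro D hD
      rcases Multiset.mem_cons.mp hD with rfl | hD
      · exact hAB hfC
      rcases Multiset.mem_cons.mp hD with rfl | hD
      · exact hAB
      · exact hΓ' D hD
    · exact ⟨C, hC, hfC⟩
  | boxR1 G Γ Δ Θ Λ A _ _ _ ih2 =>
    rw [valid_plug]
    intro W hW R V w v hl
    have hp2 := valid_plug.mp ih2 W hW R V w v hl
    rw [tau_dn_iff] at hp2 ⊢
    intro hΓ
    rcases hp2 hΓ with h | h
    · exact Or.inl h
    · refine Or.inr fun u huv => ?_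
      rw [tau_single_iff]
      intro hΘ
      have h2 := tau_up_iff.mp (h u huv) hΘ
      rcases h2 with h2 | h2
      · exact h2
      · refine ⟨A.box, Multiset.mem_cons_self _ _, ?_⟩
        rw [force_box]
        intro x hux
        exact single_zero (h2 x hux)
  | bboxR1 G Γ Δ Θ Λ A _ _ _ ih2 =>
    rw [valid_plug]
    intro W hW R V w v hl
    have hp2 := valid_plug.mp ih2 W hW R V w v hl
    rw [tau_up_iff] at hp2 ⊢
    intro hΓ
    rcases hp2 hΓ with h | h
    · exact Or.inl h
    · refine Or.inr fun u huv => ?_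
      rw [tau_single_iff]
      intro hΘ
      have h2 := tau_dn_iff.mp (h u huv) hΘ
      rcases h2 with h2 | h2
      · exact h2
      · refine ⟨A.bbox, Multiset.mem_cons_self _ _, ?_⟩
        rw [force_bbox]
        intro x hux
        exact single_zero (h2 x hux)
  | boxR2 G Γ Δ A _ _ ih =>
    rw [valid_plug]
    intro W hW R V w v hl
    have hp := valid_plug.mp ih W hW R V w v hl
    rw [tau_up_iff] at hp
    rw [tau_single_iff]
    intro hΓ
    rcases hp hΓ with h | h
    · exact h
    · refine ⟨A.box, Multiset.mem_cons_self _ _, ?_⟩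
      rw [force_box]
      intro x hvx
      exact single_zero (h x hvx)
  | bboxR2 G Γ Δ A _ _ ih =>
    rw [valid_plug]
    intro W hW R V w v hl
    have hp := valid_plug.mp ih W hW R V w v hl
    rw [tau_dn_iff] at hp
    rw [tau_single_iff]
    intro hΓ
    rcases hp hΓ with h | h
    · exact h
    · refine ⟨A.bbox, Multiset.mem_cons_self _ _, ?_⟩
      rw [force_bbox]
      intro x hvx
      exact single_zero (h x hvx)
  | boxL1 G Γ Δ Θ Λ A _ ih =>
    rw [valid_plug]
    intro W hW R V w v hl
    have hp := valid_plug.mp ih W hW R V w v hl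
    rw [tau_up_iff] at hp ⊢
    intro hΓ
    rcases hp hΓ with h | h
    · exact Or.inl h
    · refine Or.inr fun u hvu => ?_
      rw [tau_single_iff]
      intro hΘ
      apply tau_single_iff.mp (h u hvu)
      intro C hC
      rcases Multiset.mem_cons.mp hC with rfl | hC
      · exact (hΓ _ (Multiset.mem_cons_self _ _)) u hvu
      · exact hΘ C hC
  | bboxL1 G Γ Δ Θ Λ A _ ih =>
    rw [valid_plug]
    intro W hW R V w v hl
    have hp := valid_plug.mp ih W hW R V w v hl
    rw [tau_dn_iff] at hp ⊢
    intro hΓ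
    rcases hp hΓ with h | h
    · exact Or.inl h
    · refine Or.inr fun u hvu => ?_
      rw [tau_single_iff]
      intro hΘ
      apply tau_single_iff.mp (h u hvu)
      intro C hC
      rcases Multiset.mem_cons.mp hC with rfl | hC
      · exact (hΓ _ (Multiset.mem_cons_self _ _)) u hvu
      · exact hΘ C hC
  | boxL2 G Γ Δ Θ Λ A _ ih =>
    rw [valid_plug]
    intro W hW R V w v hl
    have hp := valid_plug.mp ih W hW R V w v hl
    rw [tau_single_iff] at hp
    rw [tau_dn_iff]
    intro hΓ
    by_cases hΔ : ∃ B ∈ Δ, Force R V v B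
    · exact Or.inl hΔ
    · refine Or.inr fun u huv => ?_
      rw [tau_single_iff]
      intro hΘ
      exfalso
      apply hΔ
      apply hp
      intro C hC
      rcases Multiset.mem_cons.mp hC with rfl | hC
      · exact (hΘ _ (Multiset.mem_cons_self _ _)) v huv
      · exact hΓ C hC
  | bboxL2 G Γ Δ Θ Λ A _ ih =>
    rw [valid_plug]
    intro W hW R V w v hl
    have hp := valid_plug.mp ih W hW R V w v hl
    rw [tau_single_iff] at hp
    rw [tau_up_iff]
    intro hΓ
    by_cases hΔ : ∃ B ∈ Δ, Force R V v B
    · exact Or.inl hΔ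
    · refine Or.inr fun u huv => ?_
      rw [tau_single_iff]
      intro hΘ
      exfalso
      apply hΔ
      apply hp
      intro C hC
      rcases Multiset.mem_cons.mp hC with rfl | hC
      · exact (hΘ _ (Multiset.mem_cons_self _ _)) v huv
      · exact hΓ C hC
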